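/- Let (γ̃ⁱ, ξ̃ⁱ), i = 1,...,n, be i.i.d. copies of (γ̃, ξ̃) ∈ ℝ^p × ℝ^q, fix γ ∈ ℝ^p and x, and assume: (i) ℓ(x,·) takes values in [0,1]; (ii) the map y ↦ E[ℓ(x,ξ̃)|γ̃=y] is L_γ-Lipschitz; (iii) γ̃ has density bounded below by f̲ > 0 on its support, which contains B(γ,h). Define the spherical-kernel Nadaraya-Watson estimator Ê(γ) = ∑ᵢ ℓ(x,ξ̃ⁱ)·1{‖γ-γ̃ⁱ‖≤h}/∑ⱼ 1{‖γ-γ̃ʲ‖≤h} (and Ê(γ)=0 when the denominator is 0). Then for any ε ∈ [0,1], P(|E[ℓ(x,ξ̃)|γ̃=γ] - Ê(γ)| > L_γ·h + ε) ≤ 2·exp(-n·c·f̲·h^p·ε²/2), where c = π^{p/2}/Γ(p/2+1). -/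

import Mathlib

open MeasureTheory ProbabilityTheory
open scoped ENNReal

open Real


/-- Hoeffding's lemma, scalar form. -/
lemma hoeff_scalar (c t : ℝ) (hc0 : 0 ≤ c) (hc1 : c ≤ 1) (ht : 0 ≤ t) :
    c * exp (t * (c - 1)) + (1 - c) * exp (t * c) ≤ exp (t ^ 2 / 8) := by
  set D : ℝ → ℝ := fun t => 1 - c + c * exp (-t) with hDdef
  have hD : ∀ s : ℝ, 0 < D s := by
    intro s
    rcases lt_or_ge c 1 with hlt | hge
    · have : 0 ≤ c * exp (-s) := mul_nonneg hc0 (exp_pos _).le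
      simp only [hDdef]; linarith
    · have hc : c = 1 := le_antisymm hc1 hge
      simp [hDdef, hc, exp_pos]
  have hDderiv : ∀ s : ℝ, HasDerivAt D (-(c * exp (-s))) s := by
    intro s
    have h1 : HasDerivAt (fun u : ℝ => exp (-u)) (-exp (-s)) s := by
      simpa [Function.comp_def] using (Real.hasDerivAt_exp (-s)).comp s (hasDerivAt_neg s)
    simpa [hDdef, mul_comm, mul_neg] using ((h1.const_mul c).const_add (1 - c))
  set ψ1 : ℝ → ℝ := fun t => t / 4 - c + c * exp (-t) / D t with hψ1def
  have hψ1deriv : ∀ s : ℝ, HasDerivAt ψ1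
      (1 / 4 + ((-(c * exp (-s))) * D s - c * exp (-s) * (-(c * exp (-s)))) / (D s) ^ 2) s := by
    intro s
    have hnum : HasDerivAt (fun u : ℝ => c * exp (-u)) (-(c * exp (-s))) s := by
      have h1 : HasDerivAt (fun u : ℝ => exp (-u)) (-exp (-s)) s := by
        simpa [Function.comp_def] using (Real.hasDerivAt_exp (-s)).comp s (hasDerivAt_neg s)
      simpa [mul_neg] using h1.const_mul c
    have hdiv := hnum.div (hDderiv s) (hD s).ne'
    have hlin : HasDerivAt (fun u : ℝ => u / 4 - c) (1 / 4) s := by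
      simpa using ((hasDerivAt_id s).div_const 4).sub_const c
    exact hlin.add hdiv
  have hψ1nonneg : ∀ s : ℝ, 0 ≤ s → 0 ≤ ψ1 s := by
    have hmono : Monotone ψ1 := by
      apply monotone_of_deriv_nonneg
      · exact fun s => (hψ1deriv s).differentiableAt
      · intro s
        rw [(hψ1deriv s).deriv]
        have hb : 0 ≤ c * exp (-s) := mul_nonneg hc0 (exp_pos _).le
        have ha : 0 ≤ 1 - c := by linarith
        have hDs : D s = (1 - c) + c * exp (-s) := rfl
        have h4 : 0 < (D s) ^ 2 := pow_pos (hD s) 2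
        have h6 : 4 * ((1 - c) * (c * exp (-s))) ≤ D s ^ 2 := by
          rw [hDs]; nlinarith [sq_nonneg ((1 - c) - c * exp (-s))]
        have h7 : (-(c * exp (-s)) * D s - c * exp (-s) * -(c * exp (-s)))
            = -((1 - c) * (c * exp (-s))) := by rw [hDs]; ring
        rw [h7, neg_div]
        have h8 : (1 - c) * (c * exp (-s)) / D s ^ 2 ≤ 1 / 4 := by
          rw [div_le_iff₀ h4]; nlinarith
        linarith
    intro s hs
    have h0 : ψ1 0 = 0 := by simp [hψ1def, hDdef]
    calc (0:ℝ) = ψ1 0 := h0.symm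
    _ ≤ ψ1 s := hmono hs
  -- now ψ
  set ψ : ℝ → ℝ := fun t => t ^ 2 / 8 - t * c - Real.log (D t) with hψdef
  have hψderiv : ∀ s : ℝ, HasDerivAt ψ (ψ1 s) s := by
    intro s
    have hlog : HasDerivAt (fun u : ℝ => Real.log (D u)) ((D s)⁻¹ * -(c * exp (-s))) s := by
      have := (Real.hasDerivAt_log (hD s).ne').comp s (hDderiv s)
      exact this
    have hsq : HasDerivAt (fun u : ℝ => u ^ 2 / 8 - u * c) (s / 4 - c) s := by
      have h1 : HasDerivAt (fun u : ℝ => u ^ 2 / 8) (s / 4) s := by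
        have := ((hasDerivAt_pow 2 s).div_const 8)
        refine this.congr_deriv ?_; norm_num; ring
      have h2 : HasDerivAt (fun u : ℝ => u * c) c s := by
        simpa using (hasDerivAt_id s).mul_const c
      exact h1.sub h2
    have := hsq.sub hlog
    refine this.congr_deriv ?_
    simp only [hψ1def]
    ring
  have hψ0 : ψ 0 = 0 := by simp [hψdef, hDdef]
  have hψt : 0 ≤ ψ t := by
    have hmono : MonotoneOn ψ (Set.Ici (0:ℝ)) := by
      apply monotoneOn_of_deriv_nonneg (convex_Ici 0)
      · exact fun x _ => (hψderiv x).differentiableAt.continuousAt.continuousWithinAt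
      · intro x hx
        exact (hψderiv x).differentiableAt.differentiableWithinAt
      · intro x hx
        rw [(hψderiv x).deriv]
        rw [interior_Ici] at hx
        exact hψ1nonneg x (le_of_lt hx)
    calc (0:ℝ) = ψ 0 := hψ0.symm
    _ ≤ ψ t := hmono (Set.self_mem_Ici) (Set.mem_Ici.mpr ht) ht
  -- conclude
  have hDt : D t ≤ exp (t ^ 2 / 8 - t * c) := by
    have hlog : Real.log (D t) ≤ t ^ 2 / 8 - t * c := by
      simp only [hψdef] at hψt; linarith
    calc D t = exp (Real.log (D t)) := (Real.exp_log (hD t)).symm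
    _ ≤ _ := Real.exp_le_exp.mpr hlog
  have hfin : exp (t * c) * D t ≤ exp (t ^ 2 / 8) := by
    calc exp (t * c) * D t ≤ exp (t * c) * exp (t ^ 2 / 8 - t * c) := by
          exact mul_le_mul_of_nonneg_left hDt (exp_pos _).le
    _ = exp (t ^ 2 / 8) := by rw [← Real.exp_add]; ring_nf
  have hsplit : exp (t * c) * exp (-t) = exp (t * (c - 1)) := by
    rw [← Real.exp_add]; ring_nf
  calc c * exp (t * (c - 1)) + (1 - c) * exp (t * c) = exp (t * c) * D t := by
        simp only [hDdef]
        rw [← hsplit]; ring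
  _ ≤ _ := hfin


lemma eps_ineq (ε : ℝ) (h0 : 0 ≤ ε) (h1 : ε ≤ 1) :
    ε ^ 2 / 2 ≤ 1 - exp (-(2 * ε ^ 2)) := by
  have hu1 : ε ^ 2 ≤ 1 := by nlinarith
  have h2 := Real.add_one_le_exp (2 * ε ^ 2)
  have h3 : exp (-(2 * ε ^ 2)) * exp (2 * ε ^ 2) = 1 := by
    rw [← Real.exp_add]; simp
  nlinarith [Real.exp_pos (-(2 * ε ^ 2)), sq_nonneg ε,
    mul_le_mul_of_nonneg_left h2 (Real.exp_pos (-(2 * ε ^ 2))).le]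

lemma vol_cball (p : ℕ) (γ : EuclideanSpace ℝ (Fin p)) (h : ℝ) (hh : 0 ≤ h) :
    volume (Metric.closedBall γ h)
      = ENNReal.ofReal (h ^ p * (Real.pi ^ ((p : ℝ) / 2) / Real.Gamma ((p : ℝ) / 2 + 1))) := by
  rcases Nat.eq_zero_or_pos p with hp | hp
  · subst hp
    haveI : Subsingleton (EuclideanSpace ℝ (Fin 0)) := ⟨fun a b => by ext i; exact Fin.elim0 i⟩
    have hball : Metric.closedBall γ h = Set.univ := by
      apply Set.eq_univ_iff_forall.mpr
      intro y
      rw [Metric.mem_closedBall, Subsingleton.elim y γ]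
      simpa using hh
    have huniv : (volume : Measure (EuclideanSpace ℝ (Fin 0))) Set.univ = 1 := by
      have hmp := (EuclideanSpace.volume_preserving_symm_measurableEquiv_toLp (Fin 0)).map_eq
      calc (volume : Measure (EuclideanSpace ℝ (Fin 0))) Set.univ
          = (volume : Measure (Fin 0 → ℝ)) Set.univ := by
            rw [← hmp, MeasurableEquiv.map_apply]; simp
        _ = 1 := by
            rw [MeasureTheory.volume_pi, Measure.pi_univ]; simp
    rw [hball, huniv]
    norm_num [Real.Gamma_one]
  · haveI : Nonempty (Fin p) := ⟨⟨0, hp⟩⟩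
    rw [EuclideanSpace.volume_closedBall, Fintype.card_fin]
    have hsq : Real.sqrt Real.pi ^ p = Real.pi ^ ((p : ℝ) / 2) := by
      rw [Real.sqrt_eq_rpow, ← Real.rpow_natCast (Real.pi ^ ((1:ℝ)/2)) p,
        ← Real.rpow_mul Real.pi_pos.le]
      congr 1
      ring
    rw [hsq, ← ENNReal.ofReal_pow hh, ← ENNReal.ofReal_mul (by positivity)]


set_option maxHeartbeats 2000000 in
theorem stmt_10 {Ω : Type*} [MeasurableSpace Ω] (μ : Measure Ω) [IsProbabilityMeasure μ]
    {p q n : ℕ} (hn : 0 < n)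
    (γt : Fin n → Ω → EuclideanSpace ℝ (Fin p)) (ξt : Fin n → Ω → EuclideanSpace ℝ (Fin q))
    (γ0 : Ω → EuclideanSpace ℝ (Fin p)) (ξ0 : Ω → EuclideanSpace ℝ (Fin q))
    (hγmeas : ∀ i, Measurable (γt i)) (hξmeas : ∀ i, Measurable (ξt i))
    (hγ0 : Measurable γ0) (hξ0 : Measurable ξ0)
    -- (γt i, ξt i) are i.i.d. copies of (γ0, ξ0)
    (hindep : iIndepFun (fun i ω => (γt i ω, ξt i ω)) μ)
    (hident : ∀ i, μ.map (fun ω => (γt i ω, ξt i ω)) = μ.map (fun ω => (γ0 ω, ξ0 ω)))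
    -- the loss ℓ(x, ·) for the fixed decision x, with values in [0,1]
    (loss : EuclideanSpace ℝ (Fin q) → ℝ) (hloss : Measurable loss)
    (hbdd : ∀ ξ, loss ξ ∈ Set.Icc (0 : ℝ) 1)
    -- m is the regression function y ↦ E[ℓ(x, ξ̃) | γ̃ = y]
    (m : EuclideanSpace ℝ (Fin p) → ℝ)
    (hm : (fun ω => m (γ0 ω))
        =ᵐ[μ] μ[(fun ω => loss (ξ0 ω)) | MeasurableSpace.comap γ0 inferInstance])
    (Lγ : ℝ) (hLγ : 0 ≤ Lγ) (hmLip : ∀ y z, |m y - m z| ≤ Lγ * ‖y - z‖)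
    -- density of γ̃ bounded below by fbar on the ball B(γ, h)
    (f : EuclideanSpace ℝ (Fin p) → ℝ≥0∞) (hdensity : μ.map γ0 = volume.withDensity f)
    (γ : EuclideanSpace ℝ (Fin p)) (h fbar : ℝ) (hh : 0 < h) (hfbar : 0 < fbar)
    (hlb : ∀ y ∈ Metric.closedBall γ h, ENNReal.ofReal fbar ≤ f y)
    (ε : ℝ) (hε0 : 0 ≤ ε) (hε1 : ε ≤ 1)
    -- the Nadaraya-Watson estimator with spherical kernel
    (NW : Ω → ℝ)
    (hNW : ∀ ω, NW ω =
      if (0 : ℝ) < ∑ j, (if ‖γ - γt j ω‖ ≤ h then (1 : ℝ) else 0) then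
        (∑ i, (if ‖γ - γt i ω‖ ≤ h then (1 : ℝ) else 0) * loss (ξt i ω)) /
          (∑ j, (if ‖γ - γt j ω‖ ≤ h then (1 : ℝ) else 0))
      else 0) :
    (μ {ω | Lγ * h + ε < |m γ - NW ω|}).toReal
      ≤ 2 * Real.exp (-(n : ℝ) * (Real.pi ^ ((p : ℝ) / 2) / Real.Gamma ((p : ℝ) / 2 + 1))
          * fbar * h ^ (p : ℕ) * ε ^ 2 / 2) := by
  classical
  set A : Set (EuclideanSpace ℝ (Fin p)) := Metric.closedBall γ h with hAdef
  have hAmeas : MeasurableSet A := Metric.isClosed_closedBall.measurableSet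
  have hAmem : ∀ y : EuclideanSpace ℝ (Fin p), (‖γ - y‖ ≤ h ↔ y ∈ A) := by
    intro y
    rw [hAdef, Metric.mem_closedBall, dist_eq_norm, norm_sub_rev]
  -- m is continuous hence measurable
  have hmcont : Continuous m := by
    refine (LipschitzWith.of_dist_le_mul (K := Real.toNNReal Lγ) ?_).continuous
    intro x y
    rw [Real.dist_eq, dist_eq_norm, Real.coe_toNNReal _ hLγ]
    exact hmLip x y
  have hmmeas : Measurable m := hmcont.measurable
  -- the sub-σ-algebra generated by γ0
  have hGle : MeasurableSpace.comap γ0 inferInstance ≤ ‹MeasurableSpace Ω› := hγ0.comap_le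
  haveI hfin : IsFiniteMeasure (μ.trim hGle) := isFiniteMeasure_trim hGle
  have hγ0G : @Measurable Ω (EuclideanSpace ℝ (Fin p)) (MeasurableSpace.comap γ0 inferInstance) _ γ0 :=
    Measurable.of_comap_le le_rfl
  have hXint : Integrable (fun ω => loss (ξ0 ω)) μ := by
    refine (integrable_const (1 : ℝ)).mono'
      ((hloss.comp hξ0).aestronglyMeasurable) (ae_of_all _ fun ω => ?_)
    rw [Real.norm_eq_abs, abs_le]
    exact ⟨by linarith [(hbdd (ξ0 ω)).1], by simpa using (hbdd (ξ0 ω)).2⟩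
  -- tower property
  have tower : ∀ g : EuclideanSpace ℝ (Fin p) → ℝ, Measurable g → ∀ C : ℝ,
      (∀ y, |g y| ≤ C) →
      ∫ ω, g (γ0 ω) * loss (ξ0 ω) ∂μ = ∫ ω, g (γ0 ω) * m (γ0 ω) ∂μ := by
    intro g hg C hgC
    have hfG : StronglyMeasurable[MeasurableSpace.comap γ0 inferInstance] (fun ω => g (γ0 ω)) :=
      (hg.comp hγ0G).stronglyMeasurable
    have hfg : Integrable ((fun ω => g (γ0 ω)) * fun ω => loss (ξ0 ω)) μ := by
      refine (integrable_const (C * 1 : ℝ)).mono'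
        (((hg.comp hγ0).mul (hloss.comp hξ0)).aestronglyMeasurable)
        (ae_of_all _ fun ω => ?_)
      rw [Pi.mul_apply, Real.norm_eq_abs, abs_mul]
      have h1 : |g (γ0 ω)| ≤ C := hgC _
      have h2 : |loss (ξ0 ω)| ≤ 1 := by
        rw [abs_le]
        exact ⟨by linarith [(hbdd (ξ0 ω)).1], by simpa using (hbdd (ξ0 ω)).2⟩
      exact mul_le_mul h1 h2 (abs_nonneg _) ((abs_nonneg _).trans h1)
    calc ∫ ω, g (γ0 ω) * loss (ξ0 ω) ∂μ
        = ∫ ω, ((fun ω => g (γ0 ω)) * fun ω => loss (ξ0 ω)) ω ∂μ := rfl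
      _ = ∫ ω, (μ[(fun ω => g (γ0 ω)) * fun ω => loss (ξ0 ω)|MeasurableSpace.comap γ0 inferInstance]) ω ∂μ :=
          (integral_condExp hGle).symm
      _ = ∫ ω, ((fun ω => g (γ0 ω)) * μ[(fun ω => loss (ξ0 ω))|MeasurableSpace.comap γ0 inferInstance]) ω ∂μ :=
          integral_congr_ae (condExp_mul_of_stronglyMeasurable_left hfG hfg hXint)
      _ = ∫ ω, g (γ0 ω) * m (γ0 ω) ∂μ := by
          refine integral_congr_ae (hm.mono fun ω hω => ?_)
          have hω' : m (γ0 ω)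
              = (μ[(fun ω => loss (ξ0 ω))|MeasurableSpace.comap γ0 inferInstance]) ω := hω
          simp only [Pi.mul_apply]
          rw [← hω']
  -- m ∘ γ0 takes values in [0,1] a.e.
  have hm01 : ∀ᵐ ω ∂μ, m (γ0 ω) ∈ Set.Icc (0:ℝ) 1 := by
    have h0 : 0 ≤ᵐ[μ] μ[(fun ω => loss (ξ0 ω))|MeasurableSpace.comap γ0 inferInstance] :=
      condExp_nonneg (ae_of_all _ fun ω => (hbdd (ξ0 ω)).1)
    have h1 : μ[(fun ω => loss (ξ0 ω))|MeasurableSpace.comap γ0 inferInstance] ≤ᵐ[μ] μ[(fun _ => (1:ℝ))|MeasurableSpace.comap γ0 inferInstance] :=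
      condExp_mono hXint (integrable_const 1) (ae_of_all _ fun ω => (hbdd (ξ0 ω)).2)
    have h2 : μ[(fun _ => (1:ℝ))|MeasurableSpace.comap γ0 inferInstance] = fun _ => (1:ℝ) := condExp_const hGle 1
    filter_upwards [hm, h0, h1] with ω hω1 hω2 hω3
    have hω1' : m (γ0 ω)
        = (μ[(fun ω => loss (ξ0 ω))|MeasurableSpace.comap γ0 inferInstance]) ω := hω1
    rw [h2] at hω3
    constructor
    · rw [hω1']; simpa using hω2
    · rw [hω1']; exact hω3
  -- weight function and hit probability
  set w0 : Ω → ℝ := fun ω => if ‖γ - γ0 ω‖ ≤ h then 1 else 0 with hw0def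
  have hw0meas : Measurable w0 := by
    refine Measurable.ite ?_ measurable_const measurable_const
    exact measurableSet_le ((measurable_const.sub hγ0).norm) measurable_const
  have hw0_mem : ∀ ω, (0:ℝ) ≤ w0 ω ∧ w0 ω ≤ 1 := by
    intro ω
    simp only [hw0def]
    split <;> norm_num
  have hw0int : Integrable w0 μ := by
    refine (integrable_const (1:ℝ)).mono' hw0meas.aestronglyMeasurable (ae_of_all _ fun ω => ?_)
    rw [Real.norm_eq_abs, abs_le]
    exact ⟨by linarith [(hw0_mem ω).1], (hw0_mem ω).2⟩
  set Pt : ℝ := ∫ ω, w0 ω ∂μ with hPtdef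
  have hPt_nonneg : 0 ≤ Pt := integral_nonneg fun ω => (hw0_mem ω).1
  have hPt_eq : Pt = (μ (γ0 ⁻¹' A)).toReal := by
    have hw0ind : w0 = fun ω => Set.indicator (γ0 ⁻¹' A) (fun _ => (1:ℝ)) ω := by
      funext ω
      by_cases hc : γ0 ω ∈ A
      · simp [hw0def, (hAmem (γ0 ω)).mpr hc, Set.indicator_of_mem, hc]
      · have : ¬ (‖γ - γ0 ω‖ ≤ h) := fun hcc => hc ((hAmem (γ0 ω)).mp hcc)
        simp [hw0def, this, Set.indicator_of_notMem, hc]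
    rw [hPtdef, hw0ind, integral_indicator_const (1:ℝ) (hγ0 hAmeas)]
    simp
    rfl
  set Creal : ℝ := Real.pi ^ ((p:ℝ)/2) / Real.Gamma ((p:ℝ)/2 + 1) with hCdef
  have hC_nonneg : 0 ≤ Creal := by
    have hΓ : 0 < Real.Gamma ((p:ℝ)/2 + 1) := Real.Gamma_pos_of_pos (by positivity)
    positivity
  set Plb : ℝ := fbar * (h ^ p * Creal) with hPlbdef
  have hPlb_nonneg : 0 ≤ Plb := by positivity
  have hPlb_le : Plb ≤ Pt := by
    have hchain : ENNReal.ofReal fbar * volume A ≤ μ (γ0 ⁻¹' A) := by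
      calc ENNReal.ofReal fbar * volume A
          = ∫⁻ y, A.indicator (fun _ => ENNReal.ofReal fbar) y ∂volume := by
            rw [lintegral_indicator_const hAmeas]
        _ ≤ ∫⁻ y, A.indicator f y ∂volume := by
            refine lintegral_mono fun y => ?_
            by_cases hy : y ∈ A
            · simpa [Set.indicator_of_mem hy] using hlb y hy
            · simp [Set.indicator_of_notMem hy]
        _ = ∫⁻ y in A, f y ∂volume := by rw [lintegral_indicator hAmeas]
        _ = (volume.withDensity f) A := (withDensity_apply f hAmeas).symm
        _ = (μ.map γ0) A := by rw [hdensity]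
        _ = μ (γ0 ⁻¹' A) := Measure.map_apply hγ0 hAmeas
    have hvol : volume A = ENNReal.ofReal (h ^ p * Creal) := by
      rw [hAdef, vol_cball p γ h hh.le, hCdef]
    rw [hvol, ← ENNReal.ofReal_mul hfbar.le] at hchain
    have := ENNReal.toReal_mono (measure_ne_top μ _) hchain
    rw [ENNReal.toReal_ofReal (by positivity)] at this
    rw [hPt_eq]
    exact this
  -- the exponential parameter
  set lam : ℝ := 4 * ε with hlamdef
  have hlam : 0 ≤ lam := by positivity
  -- integrability helper
  have intb : ∀ (v : Ω → ℝ), Measurable v → ∀ C : ℝ, (∀ᵐ ω ∂μ, |v ω| ≤ C) →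
      Integrable v μ := by
    intro v hv C hC
    exact (integrable_const C).mono' hv.aestronglyMeasurable
      (by simpa [Real.norm_eq_abs] using hC)
  -- the key one-factor bound
  have key : ∀ (φ : EuclideanSpace ℝ (Fin p) → ℝ) (xf : Ω → ℝ), Measurable φ → Measurable xf →
      (∀ᵐ ω ∂μ, φ (γ0 ω) ∈ Set.Icc (0:ℝ) 1) →
      (∀ ω, φ (γ0 ω) - 1 ≤ xf ω) → (∀ ω, xf ω ≤ φ (γ0 ω)) →
      ∀ CA : ℝ, (∀ y ∈ A, |φ y| ≤ CA) →
      (∀ ψ : EuclideanSpace ℝ (Fin p) → ℝ, Measurable ψ → ∀ Cψ : ℝ, (∀ y ∈ A, |ψ y| ≤ Cψ) →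
        ∫ ω, (w0 ω * ψ (γ0 ω)) * xf ω ∂μ = 0) →
      ∫ ω, Real.exp (lam * (w0 ω * (xf ω - ε))) ∂μ
        ≤ 1 - Pt * (1 - Real.exp (lam^2/8 - lam*ε)) := by
    intro φ xf hφm hxfm hφ01 hx1 hx2 CA hφA htow
    set cf : Ω → ℝ := fun ω => φ (γ0 ω) with hcfdef
    have hcfm : Measurable cf := hφm.comp hγ0
    set e1 : Ω → ℝ := fun ω => Real.exp (lam * (φ (γ0 ω) - 1)) with he1def
    set e2 : Ω → ℝ := fun ω => Real.exp (lam * φ (γ0 ω)) with he2def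
    have he1m : Measurable e1 := (((hφm.comp hγ0).sub measurable_const).const_mul lam).exp
    have he2m : Measurable e2 := ((hφm.comp hγ0).const_mul lam).exp
    set G1 : Ω → ℝ := fun ω => w0 ω * ((cf ω - xf ω) * e1 ω + (xf ω - cf ω + 1) * e2 ω)
      with hG1def
    set G2 : Ω → ℝ := fun ω => w0 ω * (cf ω * e1 ω + (1 - cf ω) * e2 ω) with hG2def
    have hG1m : Measurable G1 := by
      apply hw0meas.mul
      exact ((hcfm.sub hxfm).mul he1m).add (((hxfm.sub hcfm).add measurable_const).mul he2m)
    have hG2m : Measurable G2 := by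
      apply hw0meas.mul
      exact (hcfm.mul he1m).add ((measurable_const.sub hcfm).mul he2m)
    -- a.e. bounds coming from cf ∈ [0,1]
    have hG1b : ∀ᵐ ω ∂μ, |G1 ω| ≤ 1 + Real.exp lam := by
      filter_upwards [hφ01] with ω hc
      have hc0 : 0 ≤ cf ω := hc.1
      have hc1 : cf ω ≤ 1 := hc.2
      have ha : 0 ≤ cf ω - xf ω := by linarith [hx2 ω]
      have ha' : cf ω - xf ω ≤ 1 := by linarith [hx1 ω]
      have hb : 0 ≤ xf ω - cf ω + 1 := by linarith [hx1 ω]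
      have hb' : xf ω - cf ω + 1 ≤ 1 := by linarith [hx2 ω]
      have he1b : e1 ω ≤ 1 := by
        rw [he1def]
        exact Real.exp_le_one_iff.mpr (by nlinarith)
      have he2b : e2 ω ≤ Real.exp lam := by
        rw [he2def]
        exact Real.exp_le_exp.mpr (by nlinarith)
      have hpos : 0 ≤ (cf ω - xf ω) * e1 ω + (xf ω - cf ω + 1) * e2 ω :=
        add_nonneg (mul_nonneg ha (Real.exp_pos _).le) (mul_nonneg hb (Real.exp_pos _).le)
      rw [hG1def, abs_mul, abs_of_nonneg (hw0_mem ω).1, abs_of_nonneg hpos]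
      have : (cf ω - xf ω) * e1 ω + (xf ω - cf ω + 1) * e2 ω ≤ 1 + Real.exp lam := by
        have h1 : (cf ω - xf ω) * e1 ω ≤ 1 * 1 :=
          mul_le_mul ha' he1b (Real.exp_pos _).le (by norm_num)
        have h2 : (xf ω - cf ω + 1) * e2 ω ≤ 1 * Real.exp lam :=
          mul_le_mul hb' he2b (Real.exp_pos _).le (by norm_num)
        nlinarith
      calc w0 ω * ((cf ω - xf ω) * e1 ω + (xf ω - cf ω + 1) * e2 ω)
          ≤ 1 * ((cf ω - xf ω) * e1 ω + (xf ω - cf ω + 1) * e2 ω) :=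
            mul_le_mul_of_nonneg_right (hw0_mem ω).2 hpos
        _ ≤ 1 + Real.exp lam := by nlinarith
    have hG2b : ∀ᵐ ω ∂μ, |G2 ω| ≤ 1 + Real.exp lam := by
      filter_upwards [hφ01] with ω hc
      have hc0 : 0 ≤ cf ω := hc.1
      have hc1 : cf ω ≤ 1 := hc.2
      have he1b : e1 ω ≤ 1 := by
        rw [he1def]
        exact Real.exp_le_one_iff.mpr (by nlinarith)
      have he2b : e2 ω ≤ Real.exp lam := by
        rw [he2def]
        exact Real.exp_le_exp.mpr (by nlinarith)
      have hpos : 0 ≤ cf ω * e1 ω + (1 - cf ω) * e2 ω :=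
        add_nonneg (mul_nonneg hc0 (Real.exp_pos _).le)
          (mul_nonneg (by linarith) (Real.exp_pos _).le)
      rw [hG2def, abs_mul, abs_of_nonneg (hw0_mem ω).1, abs_of_nonneg hpos]
      have h1 : cf ω * e1 ω ≤ 1 * 1 := mul_le_mul hc1 he1b (Real.exp_pos _).le (by norm_num)
      have h2 : (1 - cf ω) * e2 ω ≤ 1 * Real.exp lam :=
        mul_le_mul (by linarith) he2b (Real.exp_pos _).le (by norm_num)
      calc w0 ω * (cf ω * e1 ω + (1 - cf ω) * e2 ω)
          ≤ 1 * (cf ω * e1 ω + (1 - cf ω) * e2 ω) :=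
            mul_le_mul_of_nonneg_right (hw0_mem ω).2 hpos
        _ ≤ 1 + Real.exp lam := by nlinarith
    have hG1int : Integrable G1 μ := intb G1 hG1m _ hG1b
    have hG2int : Integrable G2 μ := intb G2 hG2m _ hG2b
    -- pointwise convexity bound
    have stepA : ∀ ω, Real.exp (lam * (w0 ω * (xf ω - ε))) ≤
        (1 - w0 ω) + Real.exp (-(lam * ε)) * G1 ω := by
      intro ω
      by_cases hw : ‖γ - γ0 ω‖ ≤ h
      · have hw1 : w0 ω = 1 := if_pos hw
        have ha : 0 ≤ cf ω - xf ω := by linarith [hx2 ω]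
        have hb : 0 ≤ xf ω - cf ω + 1 := by linarith [hx1 ω]
        have hab : (cf ω - xf ω) + (xf ω - cf ω + 1) = 1 := by ring
        have hconv := convexOn_exp.2 (Set.mem_univ (lam * (cf ω - 1)))
          (Set.mem_univ (lam * cf ω)) ha hb hab
        simp only [smul_eq_mul] at hconv
        have hxe : (cf ω - xf ω) * (lam * (cf ω - 1)) + (xf ω - cf ω + 1) * (lam * cf ω)
            = lam * xf ω := by ring
        rw [hxe] at hconv
        have hsplit : Real.exp (lam * (w0 ω * (xf ω - ε)))
            = Real.exp (-(lam * ε)) * Real.exp (lam * xf ω) := by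
          rw [← Real.exp_add, hw1]
          congr 1
          ring
        rw [hsplit]
        calc Real.exp (-(lam*ε)) * Real.exp (lam * xf ω)
            ≤ Real.exp (-(lam*ε)) * ((cf ω - xf ω) * Real.exp (lam * (cf ω - 1))
              + (xf ω - cf ω + 1) * Real.exp (lam * cf ω)) :=
            mul_le_mul_of_nonneg_left hconv (Real.exp_pos _).le
          _ = (1 - w0 ω) + Real.exp (-(lam * ε)) * G1 ω := by
              simp only [hG1def, he1def, he2def]
              rw [hw1]
              ring
      · have hw1 : w0 ω = 0 := if_neg hw
        simp only [hG1def, hw1]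
        simp
    -- integrate
    have hLHSb : ∀ᵐ ω ∂μ, |Real.exp (lam * (w0 ω * (xf ω - ε)))| ≤ Real.exp lam := by
      filter_upwards [hφ01] with ω hc
      rw [abs_of_nonneg (Real.exp_pos _).le]
      apply Real.exp_le_exp.mpr
      have hle1 : w0 ω * (xf ω - ε) ≤ 1 := by
        rcases (hw0_mem ω).1.eq_or_lt with hw | hw
        · rw [← hw]; norm_num
        · have hw1 : w0 ω ≤ 1 := (hw0_mem ω).2
          nlinarith [hx2 ω, hc.2]
      nlinarith
    have hLHSm : Measurable fun ω => Real.exp (lam * (w0 ω * (xf ω - ε))) :=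
      (((hw0meas.mul (hxfm.sub measurable_const))).const_mul lam).exp
    have hLHSint : Integrable (fun ω => Real.exp (lam * (w0 ω * (xf ω - ε)))) μ :=
      intb _ hLHSm _ hLHSb
    have hRHSint : Integrable (fun ω => (1 - w0 ω) + Real.exp (-(lam * ε)) * G1 ω) μ :=
      ((integrable_const (1:ℝ)).sub hw0int).add (hG1int.const_mul _)
    have stepB : ∫ ω, Real.exp (lam * (w0 ω * (xf ω - ε))) ∂μ
        ≤ (1 - Pt) + Real.exp (-(lam * ε)) * ∫ ω, G1 ω ∂μ := by
      calc ∫ ω, Real.exp (lam * (w0 ω * (xf ω - ε))) ∂μ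
          ≤ ∫ ω, ((1 - w0 ω) + Real.exp (-(lam * ε)) * G1 ω) ∂μ :=
            integral_mono_ae hLHSint hRHSint (ae_of_all _ stepA)
        _ = (∫ ω, (1 - w0 ω) ∂μ) + ∫ ω, Real.exp (-(lam * ε)) * G1 ω ∂μ :=
            integral_add ((integrable_const (1:ℝ)).sub hw0int) (hG1int.const_mul _)
        _ = (1 - Pt) + Real.exp (-(lam * ε)) * ∫ ω, G1 ω ∂μ := by
            rw [integral_const_mul, integral_sub (integrable_const (1:ℝ)) hw0int]
            simp [hPtdef]
    -- the conditional-mean step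
    have stepD : ∫ ω, G1 ω ∂μ = ∫ ω, G2 ω ∂μ := by
      set ψ : EuclideanSpace ℝ (Fin p) → ℝ :=
        fun y => Real.exp (lam * φ y) - Real.exp (lam * (φ y - 1)) with hψdef
      have hψm : Measurable ψ := ((hφm.const_mul lam).exp).sub
        (((hφm.sub measurable_const).const_mul lam).exp)
      have hψA : ∀ y ∈ A, |ψ y| ≤ 2 * Real.exp (lam * (CA + 1)) := by
        intro y hy
        have hb1 : Real.exp (lam * φ y) ≤ Real.exp (lam * (CA + 1)) := by
          apply Real.exp_le_exp.mpr
          have h1 : φ y ≤ CA + 1 := by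
            have := (abs_le.mp (hφA y hy)).2
            linarith
          exact mul_le_mul_of_nonneg_left h1 hlam
        have hb2 : Real.exp (lam * (φ y - 1)) ≤ Real.exp (lam * (CA + 1)) := by
          apply Real.exp_le_exp.mpr
          have h1 : φ y - 1 ≤ CA + 1 := by
            have := (abs_le.mp (hφA y hy)).2
            linarith
          exact mul_le_mul_of_nonneg_left h1 hlam
        have hψy : ψ y = Real.exp (lam * φ y) - Real.exp (lam * (φ y - 1)) := by
          simp only [hψdef]
        rw [hψy, abs_le]
        constructor
        · nlinarith [Real.exp_pos (lam * φ y), Real.exp_pos (lam * (φ y - 1)),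
            Real.exp_pos (lam * (CA + 1))]
        · nlinarith [Real.exp_pos (lam * φ y), Real.exp_pos (lam * (φ y - 1)),
            Real.exp_pos (lam * (CA + 1))]
      have hdiff : ∀ ω, G1 ω - G2 ω = (w0 ω * ψ (γ0 ω)) * xf ω := by
        intro ω
        simp only [hG1def, hG2def, hψdef, he1def, he2def, hcfdef]
        ring
      have h0 := htow ψ hψm (2 * Real.exp (lam * (CA + 1))) hψA
      have hsub := integral_sub hG1int hG2int
      have hzero : ∫ ω, (G1 ω - G2 ω) ∂μ = 0 := by
        rw [integral_congr_ae (ae_of_all _ hdiff)]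
        exact h0
      rw [hzero] at hsub
      linarith [hsub.symm]
    -- Hoeffding bound on G2
    have hwexp : Integrable (fun ω => w0 ω * Real.exp (lam^2/8)) μ := hw0int.mul_const _
    have hle2 : ∀ᵐ ω ∂μ, G2 ω ≤ w0 ω * Real.exp (lam^2/8) := by
      filter_upwards [hφ01] with ω hc
      simp only [hG2def, he1def, he2def, hcfdef]
      exact mul_le_mul_of_nonneg_left
        (hoeff_scalar (φ (γ0 ω)) lam hc.1 hc.2 hlam) (hw0_mem ω).1
    have stepE : ∫ ω, G2 ω ∂μ ≤ Pt * Real.exp (lam^2/8) := by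
      calc ∫ ω, G2 ω ∂μ ≤ ∫ ω, w0 ω * Real.exp (lam^2/8) ∂μ :=
            integral_mono_ae hG2int hwexp hle2
        _ = Pt * Real.exp (lam^2/8) := by rw [integral_mul_const]
    calc ∫ ω, Real.exp (lam * (w0 ω * (xf ω - ε))) ∂μ
        ≤ (1 - Pt) + Real.exp (-(lam * ε)) * ∫ ω, G1 ω ∂μ := stepB
      _ = (1 - Pt) + Real.exp (-(lam * ε)) * ∫ ω, G2 ω ∂μ := by rw [stepD]
      _ ≤ (1 - Pt) + Real.exp (-(lam * ε)) * (Pt * Real.exp (lam^2/8)) := by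
          have := mul_le_mul_of_nonneg_left stepE (Real.exp_pos (-(lam*ε))).le
          linarith
      _ = 1 - Pt * (1 - Real.exp (lam^2/8 - lam*ε)) := by
          rw [show Real.exp (lam^2/8 - lam*ε)
              = Real.exp (-(lam*ε)) * Real.exp (lam^2/8) from by
            rw [← Real.exp_add]; congr 1; ring]
          ring
  -- the functions F and T
  set F : ℝ → (EuclideanSpace ℝ (Fin p) × EuclideanSpace ℝ (Fin q)) → ℝ :=
    fun s yz => (if ‖γ - yz.1‖ ≤ h then (1:ℝ) else 0) * (s * (m yz.1 - loss yz.2) - ε)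
    with hFdef
  have hFmeas : ∀ s, Measurable (F s) := by
    intro s
    have hc : MeasurableSet {yz : EuclideanSpace ℝ (Fin p) × EuclideanSpace ℝ (Fin q) |
        ‖γ - yz.1‖ ≤ h} :=
      measurableSet_le ((measurable_const.sub measurable_fst).norm) measurable_const
    exact (Measurable.ite hc measurable_const measurable_const).mul
      ((measurable_const.mul ((hmmeas.comp measurable_fst).sub
        (hloss.comp measurable_snd))).sub measurable_const)
  set T : ℝ → Fin n → Ω → ℝ := fun s i ω => F s (γt i ω, ξt i ω) with hTdef
  have hTmeas : ∀ s i, Measurable (T s i) :=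
    fun s i => (hFmeas s).comp ((hγmeas i).prodMk (hξmeas i))
  have hTindep : ∀ s, iIndepFun (T s) μ := by
    intro s
    exact hindep.comp (fun _ => F s) (fun _ => hFmeas s)
  set Mb : ℝ := |m γ| + Lγ * h + 2 with hMbdef
  have hmA : ∀ y : EuclideanSpace ℝ (Fin p), ‖γ - y‖ ≤ h → |m y| ≤ |m γ| + Lγ * h := by
    intro y hy
    have h1 := hmLip y γ
    have h3 : Lγ * ‖y - γ‖ ≤ Lγ * h := by
      rw [norm_sub_rev]
      exact mul_le_mul_of_nonneg_left hy hLγ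
    have h4 : |m y| - |m γ| ≤ |m y - m γ| := by
      have := abs_sub_abs_le_abs_sub (m y) (m γ)
      linarith
    linarith [h1.trans h3]
  have hlossabs : ∀ z, |loss z| ≤ 1 := by
    intro z
    rw [abs_le]
    exact ⟨by linarith [(hbdd z).1], (hbdd z).2⟩
  have hTbdd : ∀ s : ℝ, |s| = 1 → ∀ i ω, |T s i ω| ≤ Mb := by
    intro s hs i ω
    simp only [hTdef, hFdef, hMbdef]
    by_cases hc : ‖γ - γt i ω‖ ≤ h
    · rw [if_pos hc, one_mul]
      have h2 := hmA _ hc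
      have h3 : |s * (m (γt i ω) - loss (ξt i ω))| ≤ |m γ| + Lγ * h + 1 := by
        rw [abs_mul, hs, one_mul]
        calc |m (γt i ω) - loss (ξt i ω)| ≤ |m (γt i ω)| + |loss (ξt i ω)| := abs_sub _ _
          _ ≤ |m γ| + Lγ * h + 1 := by linarith [hlossabs (ξt i ω)]
      calc |s * (m (γt i ω) - loss (ξt i ω)) - ε|
          ≤ |s * (m (γt i ω) - loss (ξt i ω))| + |ε| := abs_sub _ _
        _ ≤ |m γ| + Lγ * h + 2 := by
            rw [abs_of_nonneg hε0]
            linarith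
    · rw [if_neg hc, zero_mul, abs_zero]
      positivity
  have hTint : ∀ s : ℝ, |s| = 1 → ∀ i,
      Integrable (fun ω => Real.exp (lam * T s i ω)) μ := by
    intro s hs i
    refine intb _ ((hTmeas s i).const_mul lam).exp (Real.exp (lam * Mb))
      (ae_of_all _ fun ω => ?_)
    rw [abs_of_nonneg (Real.exp_pos _).le]
    exact Real.exp_le_exp.mpr (mul_le_mul_of_nonneg_left
      ((le_abs_self _).trans (hTbdd s hs i ω)) hlam)
  -- identify the mgf with an integral over (γ0, ξ0)
  have hmgf_eq : ∀ s i, mgf (T s i) μ lam = ∫ ω, Real.exp (lam * F s (γ0 ω, ξ0 ω)) ∂μ := by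
    intro s i
    have hfm : Measurable fun yz : EuclideanSpace ℝ (Fin p) × EuclideanSpace ℝ (Fin q) =>
        Real.exp (lam * F s yz) := ((hFmeas s).const_mul lam).exp
    have hpm_i : Measurable fun ω => (γt i ω, ξt i ω) := (hγmeas i).prodMk (hξmeas i)
    have hpm_0 : Measurable fun ω => (γ0 ω, ξ0 ω) := hγ0.prodMk hξ0
    calc mgf (T s i) μ lam = ∫ ω, Real.exp (lam * T s i ω) ∂μ := rfl
      _ = ∫ yz, Real.exp (lam * F s yz) ∂(μ.map fun ω => (γt i ω, ξt i ω)) :=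
          (integral_map hpm_i.aemeasurable hfm.aestronglyMeasurable).symm
      _ = ∫ yz, Real.exp (lam * F s yz) ∂(μ.map fun ω => (γ0 ω, ξ0 ω)) := by rw [hident i]
      _ = ∫ ω, Real.exp (lam * F s (γ0 ω, ξ0 ω)) ∂μ :=
          integral_map hpm_0.aemeasurable hfm.aestronglyMeasurable
  set Bfac : ℝ := 1 - Pt * (1 - Real.exp (lam^2/8 - lam*ε)) with hBfacdef
  have hCA : ∀ y ∈ A, |m y| ≤ |m γ| + Lγ * h := fun y hy => hmA y ((hAmem y).mpr hy)
  -- the tower property specialized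
  have htowgen : ∀ (ψ : EuclideanSpace ℝ (Fin p) → ℝ), Measurable ψ → ∀ Cψ : ℝ,
      (∀ y ∈ A, |ψ y| ≤ Cψ) →
      ∫ ω, (w0 ω * ψ (γ0 ω)) * (m (γ0 ω) - loss (ξ0 ω)) ∂μ = 0 := by
    intro ψ hψ Cψ hCψ
    set g : EuclideanSpace ℝ (Fin p) → ℝ :=
      fun y => (if ‖γ - y‖ ≤ h then (1:ℝ) else 0) * ψ y with hgdef
    have hgm : Measurable g := by
      refine (Measurable.ite ?_ measurable_const measurable_const).mul hψ
      exact measurableSet_le ((measurable_const.sub measurable_id).norm) measurable_const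
    have hgb : ∀ y, |g y| ≤ max Cψ 0 := by
      intro y
      simp only [hgdef]
      by_cases hc : ‖γ - y‖ ≤ h
      · rw [if_pos hc, one_mul]
        exact (hCψ y ((hAmem y).mp hc)).trans (le_max_left _ _)
      · rw [if_neg hc, zero_mul, abs_zero]
        exact le_max_right _ _
    have ht := tower g hgm (max Cψ 0) hgb
    have hgb2 : ∀ y, |g y| * |m y| ≤ max Cψ 0 * (|m γ| + Lγ * h) := by
      intro y
      by_cases hc : ‖γ - y‖ ≤ h
      · exact mul_le_mul (hgb _) (hmA _ hc) (abs_nonneg _) (le_max_right _ _)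
      · simp only [hgdef, if_neg hc, zero_mul, abs_zero]
        positivity
    have hu1 : Integrable (fun ω => g (γ0 ω) * m (γ0 ω)) μ := by
      refine intb _ ((hgm.comp hγ0).mul (hmmeas.comp hγ0))
        (max Cψ 0 * (|m γ| + Lγ * h)) (ae_of_all _ fun ω => ?_)
      rw [abs_mul]
      exact hgb2 _
    have hu2 : Integrable (fun ω => g (γ0 ω) * loss (ξ0 ω)) μ := by
      refine intb _ ((hgm.comp hγ0).mul (hloss.comp hξ0)) (max Cψ 0 * 1)
        (ae_of_all _ fun ω => ?_)
      rw [abs_mul]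
      exact mul_le_mul (hgb _) (hlossabs _) (abs_nonneg _) (le_max_right _ _)
    have heq : ∀ ω, (w0 ω * ψ (γ0 ω)) * (m (γ0 ω) - loss (ξ0 ω))
        = g (γ0 ω) * m (γ0 ω) - g (γ0 ω) * loss (ξ0 ω) := by
      intro ω
      simp only [hgdef, hw0def]
      ring
    rw [integral_congr_ae (ae_of_all _ heq), integral_sub hu1 hu2, ← ht, sub_self]
  -- factor bounds
  have hfac1 : ∀ i, mgf (T 1 i) μ lam ≤ Bfac := by
    intro i
    rw [hmgf_eq 1 i]
    have hrw : ∫ ω, Real.exp (lam * F 1 (γ0 ω, ξ0 ω)) ∂μ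
        = ∫ ω, Real.exp (lam * (w0 ω * ((m (γ0 ω) - loss (ξ0 ω)) - ε))) ∂μ := by
      refine integral_congr_ae (ae_of_all _ fun ω => ?_)
      have hFe : F 1 (γ0 ω, ξ0 ω) = w0 ω * ((m (γ0 ω) - loss (ξ0 ω)) - ε) := by
        simp only [hFdef, hw0def]
        ring
      show Real.exp (lam * F 1 (γ0 ω, ξ0 ω))
          = Real.exp (lam * (w0 ω * (m (γ0 ω) - loss (ξ0 ω) - ε)))
      rw [hFe]
    rw [hrw, hBfacdef]
    refine key m (fun ω => m (γ0 ω) - loss (ξ0 ω)) hmmeas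
      ((hmmeas.comp hγ0).sub (hloss.comp hξ0)) hm01
      (fun ω => by
        show m (γ0 ω) - 1 ≤ m (γ0 ω) - loss (ξ0 ω)
        linarith [(hbdd (ξ0 ω)).2])
      (fun ω => by
        show m (γ0 ω) - loss (ξ0 ω) ≤ m (γ0 ω)
        linarith [(hbdd (ξ0 ω)).1])
      (|m γ| + Lγ * h) hCA htowgen
  have hfac2 : ∀ i, mgf (T (-1) i) μ lam ≤ Bfac := by
    intro i
    rw [hmgf_eq (-1) i]
    have hrw : ∫ ω, Real.exp (lam * F (-1) (γ0 ω, ξ0 ω)) ∂μ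
        = ∫ ω, Real.exp (lam * (w0 ω * ((loss (ξ0 ω) - m (γ0 ω)) - ε))) ∂μ := by
      refine integral_congr_ae (ae_of_all _ fun ω => ?_)
      have hFe : F (-1) (γ0 ω, ξ0 ω) = w0 ω * ((loss (ξ0 ω) - m (γ0 ω)) - ε) := by
        simp only [hFdef, hw0def]
        ring
      show Real.exp (lam * F (-1) (γ0 ω, ξ0 ω))
          = Real.exp (lam * (w0 ω * (loss (ξ0 ω) - m (γ0 ω) - ε)))
      rw [hFe]
    rw [hrw, hBfacdef]
    refine key (fun y => 1 - m y) (fun ω => loss (ξ0 ω) - m (γ0 ω))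
      (measurable_const.sub hmmeas) ((hloss.comp hξ0).sub (hmmeas.comp hγ0)) ?_
      (fun ω => by
        show (1 - m (γ0 ω)) - 1 ≤ loss (ξ0 ω) - m (γ0 ω)
        linarith [(hbdd (ξ0 ω)).1])
      (fun ω => by
        show loss (ξ0 ω) - m (γ0 ω) ≤ 1 - m (γ0 ω)
        linarith [(hbdd (ξ0 ω)).2])
      (1 + (|m γ| + Lγ * h)) ?_ ?_
    · filter_upwards [hm01] with ω hc
      exact ⟨by linarith [hc.2], by linarith [hc.1]⟩
    · intro y hy
      calc |1 - m y| ≤ |(1:ℝ)| + |m y| := abs_sub _ _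
        _ ≤ 1 + (|m γ| + Lγ * h) := by
            rw [abs_one]
            linarith [hCA y hy]
    · intro ψ hψ Cψ hCψ
      have h0 := htowgen ψ hψ Cψ hCψ
      have heq : ∀ ω, (w0 ω * ψ (γ0 ω)) * (loss (ξ0 ω) - m (γ0 ω))
          = -((w0 ω * ψ (γ0 ω)) * (m (γ0 ω) - loss (ξ0 ω))) := fun ω => by ring
      rw [integral_congr_ae (ae_of_all _ heq), integral_neg, h0, neg_zero]
  -- the exponential comparison
  set Bp : ℝ := Real.exp (-(Plb * (ε^2/2))) with hBpdef
  have hBfacBp : Bfac ≤ Bp := by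
    have he2 : Real.exp (lam^2/8 - lam*ε) = Real.exp (-(2*ε^2)) := by
      congr 1
      rw [hlamdef]
      ring
    have hu := eps_ineq ε hε0 hε1
    have h1 : Bfac ≤ Real.exp (-(Pt * (1 - Real.exp (-(2*ε^2))))) := by
      rw [hBfacdef, he2]
      linarith [Real.add_one_le_exp (-(Pt * (1 - Real.exp (-(2*ε^2)))))]
    refine h1.trans (Real.exp_le_exp.mpr ?_)
    have h2 : Plb * (ε^2/2) ≤ Pt * (1 - Real.exp (-(2*ε^2))) :=
      mul_le_mul hPlb_le hu (by positivity) hPt_nonneg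
    linarith
  -- Chernoff bound per side
  have hside : ∀ s : ℝ, |s| = 1 → (∀ i, mgf (T s i) μ lam ≤ Bfac) →
      (μ {ω | (0:ℝ) ≤ ∑ i, T s i ω}).toReal ≤ Bp ^ n := by
    intro s hs hfac
    have hint := iIndepFun.integrable_exp_mul_sum (t := lam) (hTindep s) (hTmeas s)
      (s := Finset.univ) (fun i _ => hTint s hs i)
    have hch := measure_ge_le_exp_mul_mgf (X := ∑ i, T s i) (t := lam) (μ := μ) 0 hlam hint
    have hmgfsum := iIndepFun.mgf_sum (t := lam) (hTindep s) (hTmeas s) Finset.univ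
    have hset : {ω | (0:ℝ) ≤ ∑ i, T s i ω} = {ω | (0:ℝ) ≤ (∑ i, T s i) ω} := by
      ext ω
      simp [Finset.sum_apply]
    calc (μ {ω | (0:ℝ) ≤ ∑ i, T s i ω}).toReal
        = (μ {ω | (0:ℝ) ≤ (∑ i, T s i) ω}).toReal := by rw [hset]
      _ ≤ Real.exp (-lam * 0) * mgf (∑ i, T s i) μ lam := hch
      _ = mgf (∑ i, T s i) μ lam := by simp
      _ = ∏ i, mgf (T s i) μ lam := hmgfsum
      _ ≤ ∏ _i : Fin n, Bp :=
          Finset.prod_le_prod (fun i _ => mgf_nonneg) (fun i _ => (hfac i).trans hBfacBp)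
      _ = Bp ^ n := by rw [Finset.prod_const, Finset.card_univ, Fintype.card_fin]
  -- event inclusion
  have hincl : {ω | Lγ * h + ε < |m γ - NW ω|} ⊆
      {ω | (0:ℝ) ≤ ∑ i, T 1 i ω} ∪ {ω | (0:ℝ) ≤ ∑ i, T (-1) i ω} := by
    intro ω hω
    simp only [Set.mem_setOf_eq] at hω
    rw [hNW ω] at hω
    by_cases hW : (0:ℝ) < ∑ j, (if ‖γ - γt j ω‖ ≤ h then (1 : ℝ) else 0)
    · rw [if_pos hW] at hω
      have hkey : ∀ s : ℝ, ∑ i, T s i ω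
          = s * (∑ i, (if ‖γ - γt i ω‖ ≤ h then (1:ℝ) else 0) * (m (γt i ω) - loss (ξt i ω)))
            - ε * ∑ j, (if ‖γ - γt j ω‖ ≤ h then (1 : ℝ) else 0) := by
        intro s
        rw [Finset.mul_sum, Finset.mul_sum, ← Finset.sum_sub_distrib]
        refine Finset.sum_congr rfl fun i _ => ?_
        simp only [hTdef, hFdef]
        ring
      have hLip1 : ∀ i : Fin n, (if ‖γ - γt i ω‖ ≤ h then (1:ℝ) else 0) * (m γ - m (γt i ω))
          ≤ (if ‖γ - γt i ω‖ ≤ h then (1:ℝ) else 0) * (Lγ * h) := by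
        intro i
        by_cases hc : ‖γ - γt i ω‖ ≤ h
        · simp only [if_pos hc, one_mul]
          have habs := abs_le.mp (hmLip γ (γt i ω))
          have hle : Lγ * ‖γ - γt i ω‖ ≤ Lγ * h := mul_le_mul_of_nonneg_left hc hLγ
          linarith [habs.2]
        · simp [if_neg hc]
      have hLip2 : ∀ i : Fin n, (if ‖γ - γt i ω‖ ≤ h then (1:ℝ) else 0) * (m (γt i ω) - m γ)
          ≤ (if ‖γ - γt i ω‖ ≤ h then (1:ℝ) else 0) * (Lγ * h) := by
        intro i
        by_cases hc : ‖γ - γt i ω‖ ≤ h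
        · simp only [if_pos hc, one_mul]
          have habs := abs_le.mp (hmLip γ (γt i ω))
          have hle : Lγ * ‖γ - γt i ω‖ ≤ Lγ * h := mul_le_mul_of_nonneg_left hc hLγ
          linarith [habs.1]
        · simp [if_neg hc]
      have hdecomp : m γ * (∑ j, (if ‖γ - γt j ω‖ ≤ h then (1 : ℝ) else 0))
            - (∑ i, (if ‖γ - γt i ω‖ ≤ h then (1:ℝ) else 0) * loss (ξt i ω))
          = (∑ i, (if ‖γ - γt i ω‖ ≤ h then (1:ℝ) else 0) * (m γ - m (γt i ω)))
            + ∑ i, (if ‖γ - γt i ω‖ ≤ h then (1:ℝ) else 0) * (m (γt i ω) - loss (ξt i ω)) := by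
        rw [Finset.mul_sum, ← Finset.sum_add_distrib, ← Finset.sum_sub_distrib]
        exact Finset.sum_congr rfl fun i _ => by ring
      have hsumw1 : ∑ i : Fin n, (if ‖γ - γt i ω‖ ≤ h then (1:ℝ) else 0) * (Lγ * h)
          = (∑ j, (if ‖γ - γt j ω‖ ≤ h then (1 : ℝ) else 0)) * (Lγ * h) := by
        rw [Finset.sum_mul]
      have hflip : (∑ i, (if ‖γ - γt i ω‖ ≤ h then (1:ℝ) else 0) * (m γ - m (γt i ω)))
            + ∑ i, (if ‖γ - γt i ω‖ ≤ h then (1:ℝ) else 0) * (m (γt i ω) - m γ) = 0 := by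
        rw [← Finset.sum_add_distrib]
        exact Finset.sum_eq_zero fun i _ => by ring
      rcases lt_abs.mp hω with hplus | hminus
      · left
        show (0:ℝ) ≤ ∑ i, T 1 i ω
        rw [hkey 1, one_mul]
        have h3 : (∑ i, (if ‖γ - γt i ω‖ ≤ h then (1:ℝ) else 0) * loss (ξt i ω))
            / (∑ j, (if ‖γ - γt j ω‖ ≤ h then (1 : ℝ) else 0))
            * (∑ j, (if ‖γ - γt j ω‖ ≤ h then (1 : ℝ) else 0))
            = ∑ i, (if ‖γ - γt i ω‖ ≤ h then (1:ℝ) else 0) * loss (ξt i ω) :=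
          div_mul_cancel₀ _ (ne_of_gt hW)
        have h2 : (Lγ * h + ε) * (∑ j, (if ‖γ - γt j ω‖ ≤ h then (1 : ℝ) else 0))
            < m γ * (∑ j, (if ‖γ - γt j ω‖ ≤ h then (1 : ℝ) else 0))
              - ∑ i, (if ‖γ - γt i ω‖ ≤ h then (1:ℝ) else 0) * loss (ξt i ω) := by
          nlinarith [hplus]
        have h4 := Finset.sum_le_sum (s := Finset.univ) (fun i _ => hLip1 i)
        rw [hsumw1] at h4
        nlinarith [hdecomp]
      · right
        show (0:ℝ) ≤ ∑ i, T (-1) i ω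
        rw [hkey (-1)]
        have h3 : (∑ i, (if ‖γ - γt i ω‖ ≤ h then (1:ℝ) else 0) * loss (ξt i ω))
            / (∑ j, (if ‖γ - γt j ω‖ ≤ h then (1 : ℝ) else 0))
            * (∑ j, (if ‖γ - γt j ω‖ ≤ h then (1 : ℝ) else 0))
            = ∑ i, (if ‖γ - γt i ω‖ ≤ h then (1:ℝ) else 0) * loss (ξt i ω) :=
          div_mul_cancel₀ _ (ne_of_gt hW)
        have h2 : (Lγ * h + ε) * (∑ j, (if ‖γ - γt j ω‖ ≤ h then (1 : ℝ) else 0))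
            < (∑ i, (if ‖γ - γt i ω‖ ≤ h then (1:ℝ) else 0) * loss (ξt i ω))
              - m γ * (∑ j, (if ‖γ - γt j ω‖ ≤ h then (1 : ℝ) else 0)) := by
          nlinarith [hminus]
        have h4 := Finset.sum_le_sum (s := Finset.univ) (fun i _ => hLip2 i)
        rw [hsumw1] at h4
        nlinarith [hdecomp, hflip]
    · rw [if_neg hW] at hω
      left
      show (0:ℝ) ≤ ∑ i, T 1 i ω
      have hwnn : ∀ j ∈ Finset.univ, (0:ℝ) ≤ (if ‖γ - γt j ω‖ ≤ h then (1:ℝ) else 0) :=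
        fun j _ => by split <;> norm_num
      have hW0 : ∑ j, (if ‖γ - γt j ω‖ ≤ h then (1:ℝ) else 0) = 0 :=
        le_antisymm (not_lt.mp hW) (Finset.sum_nonneg hwnn)
      have hzero := (Finset.sum_eq_zero_iff_of_nonneg hwnn).mp hW0
      apply le_of_eq
      symm
      refine Finset.sum_eq_zero fun i _ => ?_
      simp only [hTdef, hFdef]
      rw [hzero i (Finset.mem_univ i), zero_mul]
  -- final assembly
  have h1 := hside 1 (by norm_num) hfac1
  have h2 := hside (-1) (by norm_num) hfac2
  have hμle : μ {ω | Lγ * h + ε < |m γ - NW ω|}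
      ≤ μ {ω | (0:ℝ) ≤ ∑ i, T 1 i ω} + μ {ω | (0:ℝ) ≤ ∑ i, T (-1) i ω} :=
    (measure_mono hincl).trans (measure_union_le _ _)
  have hto := ENNReal.toReal_mono
    (ENNReal.add_ne_top.mpr ⟨measure_ne_top μ _, measure_ne_top μ _⟩) hμle
  rw [ENNReal.toReal_add (measure_ne_top μ _) (measure_ne_top μ _)] at hto
  calc (μ {ω | Lγ * h + ε < |m γ - NW ω|}).toReal
      ≤ (μ {ω | (0:ℝ) ≤ ∑ i, T 1 i ω}).toReal
        + (μ {ω | (0:ℝ) ≤ ∑ i, T (-1) i ω}).toReal := hto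
    _ ≤ Bp ^ n + Bp ^ n := add_le_add h1 h2
    _ = 2 * Bp ^ n := by ring
    _ = 2 * Real.exp (-(n : ℝ) * Creal * fbar * h ^ (p : ℕ) * ε ^ 2 / 2) := by
        rw [hBpdef, ← Real.exp_nat_mul]
        congr 1
        rw [hPlbdef]
        ring
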